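/- arXiv:2309.10928 — 3 statements merged into one kernel-verified Lean document; each statement's English description precedes it below -/
import Mathlib

section
/- For any finite simple graph G on n vertices with a fixed linear ordering of its edges, the chromatic polynomial satisfies χ_G(x) = x^n · F_G(-1/x), where F_G(x) = Σ_{F broken-circuit-free} x^{|F|} is the generating function of broken-circuit-free edge sets of G. -/
open Finset

attribute [local instance] Classical.propDecidable

variable {V : Type} [Fintype V] [DecidableEq V]

/-- The chromatic polynomial: `χ_G(x) = Σ_{A ⊆ E} (-1)^{|A|} x^{κ(A)}`. -/
noncomputable def chromaticPoly (G : SimpleGraph V) (x : ℝ) : ℝ :=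
  ∑ A ∈ G.edgeFinset.powerset,
    (-1 : ℝ) ^ A.card *
      x ^ Nat.card (SimpleGraph.fromEdgeSet (↑A : Set (Sym2 V))).ConnectedComponent

/-- `C` is the edge set of a cycle of `G`. -/
def IsCircuit (G : SimpleGraph V) (C : Finset (Sym2 V)) : Prop :=
  ∃ (v : V) (w : G.Walk v v), w.IsCycle ∧ C = w.edges.toFinset

/-- `B` is a broken circuit of `G` with respect to the edge ordering `ord`:
the edge set of a cycle with its largest edge removed. -/
def IsBrokenCircuit (G : SimpleGraph V) (ord : Sym2 V → ℕ) (B : Finset (Sym2 V)) : Prop :=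
  ∃ C, IsCircuit G C ∧ ∃ e ∈ C, (∀ f ∈ C, ord f ≤ ord e) ∧ B = C.erase e

/-- `F` is a broken-circuit-free set of edges of `G`. -/
def IsBCF (G : SimpleGraph V) (ord : Sym2 V → ℕ) (F : Finset (Sym2 V)) : Prop :=
  F ⊆ G.edgeFinset ∧ ∀ B, IsBrokenCircuit G ord B → ¬ B ⊆ F

/-- `F_G(x) = Σ_{F BCF} x^{|F|}`, the generating function of broken-circuit-free sets. -/
noncomputable def bcfSum (G : SimpleGraph V) (ord : Sym2 V → ℕ) (x : ℝ) : ℝ :=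
  ∑ F ∈ G.edgeFinset.powerset.filter (IsBCF G ord), x ^ F.card

open SimpleGraph in
lemma reach_of_adj_reach {G H : SimpleGraph V}
    (h : ∀ a b, H.Adj a b → G.Reachable a b) {u v : V}
    (hr : H.Reachable u v) : G.Reachable u v := by
  obtain ⟨w⟩ := hr
  induction w with
  | nil => exact Reachable.refl _
  | cons hadj p ih => exact (h _ _ hadj).trans ih

open SimpleGraph in
lemma ncard_cc_eq {G H : SimpleGraph V}
    (h : ∀ u v : V, G.Reachable u v ↔ H.Reachable u v) :
    Nat.card G.ConnectedComponent = Nat.card H.ConnectedComponent :=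
  Nat.card_congr (Quot.congrRight h)

open SimpleGraph in
lemma walk_reachable {G H : SimpleGraph V} {u v : V} (w : G.Walk u v)
    (hp : ∀ e ∈ w.edges, e ∈ H.edgeSet) : H.Reachable u v :=
  ⟨w.transfer H hp⟩

open SimpleGraph in
lemma trail_aux {G H : SimpleGraph V} {a b : V} : ∀ {u v : V} (w : G.Walk u v),
    w.edges.Nodup →
    (∀ f ∈ w.edges, f ≠ s(a,b) → f ∈ H.edgeSet) →
    s(a,b) ∈ w.edges →
    (H.Reachable u a ∧ H.Reachable b v) ∨ (H.Reachable u b ∧ H.Reachable a v) := by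
  intro u v w
  induction w with
  | nil => intro _ _ he; simp at he
  | @cons u c v hadj p ih =>
    intro hnd hH he
    rw [SimpleGraph.Walk.edges_cons] at he hnd hH
    rcases List.mem_cons.mp he with heq | hmem
    · -- first edge is s(a,b)
      have hnp : s(a,b) ∉ p.edges := by
        rw [heq]; exact (List.nodup_cons.mp hnd).1
      have hreach : H.Reachable c v := walk_reachable p (fun f hf => by
        refine hH f (List.mem_cons_of_mem _ hf) ?_
        rintro rfl; exact hnp hf)
      rcases Sym2.eq_iff.mp heq.symm with ⟨rfl, rfl⟩ | ⟨rfl, rfl⟩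
      · exact Or.inl ⟨Reachable.refl _, hreach⟩
      · exact Or.inr ⟨Reachable.refl _, hreach⟩
    · have hne : s(u, c) ≠ s(a,b) := by
        rintro heq; rw [heq] at hnd
        exact (List.nodup_cons.mp hnd).1 (heq ▸ hmem)
      have huc : H.Reachable u c :=
        ((H.mem_edgeSet).mp (hH _ List.mem_cons_self hne)).reachable
      have := ih (List.nodup_cons.mp hnd).2 (fun f hf => hH f (List.mem_cons_of_mem _ hf)) hmem
      rcases this with ⟨h1, h2⟩ | ⟨h1, h2⟩
      · exact Or.inl ⟨huc.trans h1, h2⟩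
      · exact Or.inr ⟨huc.trans h1, h2⟩

open SimpleGraph in
lemma cycle_erase_reachable {G : SimpleGraph V} {v a b : V} {w : G.Walk v v}
    (hw : w.IsCycle) (he : s(a,b) ∈ w.edges) :
    (fromEdgeSet (↑(w.edges.toFinset.erase s(a,b)) : Set (Sym2 V))).Reachable a b := by
  have hnd : w.edges.Nodup := hw.edges_nodup
  have hH : ∀ f ∈ w.edges, f ≠ s(a,b) →
      f ∈ (fromEdgeSet (↑(w.edges.toFinset.erase s(a,b)) : Set (Sym2 V))).edgeSet := by
    intro f hf hne
    rw [edgeSet_fromEdgeSet]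
    refine ⟨by simpa using And.intro (List.mem_toFinset.mpr hf) hne, ?_⟩
    exact fun hd => G.not_isDiag_of_mem_edgeSet (w.edges_subset_edgeSet hf) hd
  rcases trail_aux w hnd hH he with ⟨h1, h2⟩ | ⟨h1, h2⟩
  · exact h1.symm.trans h2.symm
  · exact h2.trans h1

open SimpleGraph in
lemma card_cc_bot : Nat.card (⊥ : SimpleGraph V).ConnectedComponent = Fintype.card V := by
  rw [← Nat.card_eq_fintype_card]
  apply Nat.card_congr
  refine (Equiv.ofBijective (fun v => (⊥ : SimpleGraph V).connectedComponentMk v) ⟨?_, ?_⟩).symm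
  · intro u v h
    exact reachable_bot.mp (ConnectedComponent.exact h)
  · intro c
    exact c.ind (fun v => ⟨v, rfl⟩)

open SimpleGraph in
lemma kappa_insert_eq {A : Finset (Sym2 V)} {a b : V} (hab : a ≠ b)
    (hnr : ¬ (fromEdgeSet (↑A : Set (Sym2 V))).Reachable a b) :
    Nat.card (fromEdgeSet (↑A : Set (Sym2 V))).ConnectedComponent
      = Nat.card (fromEdgeSet (↑(insert s(a,b) A) : Set (Sym2 V))).ConnectedComponent + 1 := by
  set G' := fromEdgeSet (↑A : Set (Sym2 V)) with hG'
  set Hg := fromEdgeSet (↑(insert s(a,b) A) : Set (Sym2 V)) with hHg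
  have hle : G' ≤ Hg := fromEdgeSet_mono (by simp [Finset.subset_insert])
  have hHadj : Hg.Adj a b := by
    rw [hHg, fromEdgeSet_adj]
    exact ⟨by simp, hab⟩
  -- splitting reachability in Hg
  have hsplit : ∀ u v : V, Hg.Reachable u v →
      G'.Reachable u v ∨ (G'.Reachable u a ∧ G'.Reachable b v) ∨
        (G'.Reachable u b ∧ G'.Reachable a v) := by
    intro u v hr
    obtain ⟨w0⟩ := hr
    set w := (w0.toPath : Hg.Walk u v) with hw
    have hwp : w.IsPath := w0.toPath.property
    have hedges : ∀ f ∈ w.edges, f ≠ s(a,b) → f ∈ G'.edgeSet := by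
      intro f hf hne
      have : f ∈ Hg.edgeSet := w.edges_subset_edgeSet hf
      rw [hHg, edgeSet_fromEdgeSet] at this
      rw [hG', edgeSet_fromEdgeSet]
      refine ⟨?_, this.2⟩
      rcases Finset.mem_insert.mp (by exact_mod_cast this.1) with h | h
      · exact absurd h hne
      · exact_mod_cast h
    by_cases hm : s(a,b) ∈ w.edges
    · rcases trail_aux w hwp.isTrail.edges_nodup hedges hm with h | h
      · exact Or.inr (Or.inl h)
      · exact Or.inr (Or.inr h)
    · exact Or.inl (walk_reachable w (fun f hf => hedges f hf (fun h => hm (h ▸ hf))))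
  classical
  have : Fintype G'.ConnectedComponent := Fintype.ofFinite _
  have : Fintype Hg.ConnectedComponent := Fintype.ofFinite _
  rw [Nat.card_eq_fintype_card, Nat.card_eq_fintype_card]
  set φ : G'.ConnectedComponent → Hg.ConnectedComponent :=
    SimpleGraph.ConnectedComponent.map (Hom.ofLE hle) with hφ
  have hφmk : ∀ v : V, φ (G'.connectedComponentMk v) = Hg.connectedComponentMk v :=
    fun v => rfl
  set c0 : Hg.ConnectedComponent := Hg.connectedComponentMk a with hc0
  have hmkab : Hg.connectedComponentMk b = c0 := (ConnectedComponent.sound hHadj.reachable).symm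
  have claim1 : ∀ c c' : G'.ConnectedComponent, φ c = φ c' → c = c' ∨ φ c = c0 := by
    refine SimpleGraph.ConnectedComponent.ind₂ ?_
    intro u v h
    rw [hφmk, hφmk] at h
    rcases hsplit u v (ConnectedComponent.exact h) with h' | ⟨h1, _⟩ | ⟨h1, _⟩
    · exact Or.inl (ConnectedComponent.sound h')
    · refine Or.inr ?_
      rw [hφmk, hc0]
      exact ConnectedComponent.sound (h1.mono hle)
    · refine Or.inr ?_
      rw [hφmk, ← hmkab]
      exact ConnectedComponent.sound (h1.mono hle)
  have claim2 : Function.Surjective φ := by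
    intro d
    exact d.ind (fun v => ⟨G'.connectedComponentMk v, rfl⟩)
  have hfib0 : Finset.univ.filter (fun c => φ c = c0)
      = {G'.connectedComponentMk a, G'.connectedComponentMk b} := by
    ext c
    simp only [Finset.mem_filter, Finset.mem_univ, true_and, Finset.mem_insert,
      Finset.mem_singleton]
    constructor
    · refine c.ind ?_
      intro u h
      rw [hφmk] at h
      rcases hsplit u a (ConnectedComponent.exact h) with h' | ⟨h1, _⟩ | ⟨h1, _⟩
      · exact Or.inl (ConnectedComponent.sound h')
      · exact Or.inl (ConnectedComponent.sound h1)
      · exact Or.inr (ConnectedComponent.sound h1)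
    · rintro (rfl | rfl)
      · rfl
      · rw [hφmk, hmkab]
  have hmkab' : (G'.connectedComponentMk a) ≠ (G'.connectedComponentMk b) := by
    intro h
    exact hnr (ConnectedComponent.exact h)
  have hcard0 : (Finset.univ.filter (fun c => φ c = c0)).card = 2 := by
    rw [hfib0]
    rw [Finset.card_insert_of_notMem (by simpa using hmkab'), Finset.card_singleton]
  have hcard1 : ∀ d : Hg.ConnectedComponent, d ≠ c0 →
      (Finset.univ.filter (fun c => φ c = d)).card = 1 := by
    intro d hd
    obtain ⟨c, hc⟩ := claim2 d
    rw [Finset.card_eq_one]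
    refine ⟨c, ?_⟩
    ext c'
    simp only [Finset.mem_filter, Finset.mem_univ, true_and, Finset.mem_singleton]
    constructor
    · intro h
      rcases claim1 c' c (h.trans hc.symm) with h' | h'
      · exact h'
      · exact absurd (h'.symm.trans h) (fun hh => hd hh.symm)
    · rintro rfl; exact hc
  have hsum := Finset.card_eq_sum_card_fiberwise
    (fun (c : G'.ConnectedComponent) (_ : c ∈ Finset.univ) => Finset.mem_univ (φ c))
  rw [Finset.card_univ] at hsum
  rw [hsum]
  rw [← Finset.add_sum_erase _ _ (Finset.mem_univ c0)]
  rw [hcard0]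
  have : ∑ d ∈ Finset.univ.erase c0, (Finset.univ.filter (fun c => φ c = d)).card
      = ∑ d ∈ Finset.univ.erase c0, 1 := by
    refine Finset.sum_congr rfl ?_
    intro d hd
    exact hcard1 d (Finset.mem_erase.mp hd).1
  rw [this, Finset.sum_const, smul_eq_mul, mul_one,
    Finset.card_erase_of_mem (Finset.mem_univ c0), Finset.card_univ]
  have hpos : 1 ≤ Fintype.card Hg.ConnectedComponent :=
    Fintype.card_pos_iff.mpr ⟨c0⟩
  omega

open SimpleGraph in
lemma acyclic_anti {A B : Finset (Sym2 V)} (hAB : A ⊆ B)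
    (hB : ∀ (v : V) (w : (fromEdgeSet (↑B : Set (Sym2 V))).Walk v v), ¬ w.IsCycle) :
    ∀ (v : V) (w : (fromEdgeSet (↑A : Set (Sym2 V))).Walk v v), ¬ w.IsCycle := by
  intro v w hc
  have hle : fromEdgeSet (↑A : Set (Sym2 V)) ≤ fromEdgeSet (↑B : Set (Sym2 V)) :=
    fromEdgeSet_mono (by exact_mod_cast hAB)
  have hq : ∀ e ∈ w.edges, e ∈ (fromEdgeSet (↑B : Set (Sym2 V))).edgeSet :=
    fun e he => edgeSet_mono hle (w.edges_subset_edgeSet he)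
  exact hB v (w.transfer _ hq) (hc.transfer hq)

open SimpleGraph in
lemma not_reach_of_acyclic {A : Finset (Sym2 V)} {a b : V} (hab : a ≠ b)
    (hne : s(a,b) ∉ A)
    (hacyc : ∀ (v : V) (w : (fromEdgeSet (↑(insert s(a,b) A) : Set (Sym2 V))).Walk v v),
      ¬ w.IsCycle) :
    ¬ (fromEdgeSet (↑A : Set (Sym2 V))).Reachable a b := by
  intro hr
  set G' := fromEdgeSet (↑A : Set (Sym2 V)) with hG'
  set Hg := fromEdgeSet (↑(insert s(a,b) A) : Set (Sym2 V)) with hHg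
  have hle : G' ≤ Hg := fromEdgeSet_mono (by simp [Finset.subset_insert])
  obtain ⟨w0⟩ := hr
  set p := w0.toPath with hp
  have hq : ∀ e ∈ (p : G'.Walk a b).edges, e ∈ Hg.edgeSet :=
    fun e he => edgeSet_mono hle ((p : G'.Walk a b).edges_subset_edgeSet he)
  set p' : Hg.Walk a b := (p : G'.Walk a b).transfer Hg hq with hp'
  have hpath' : p'.IsPath := p.property.transfer hq
  have hadj : Hg.Adj b a := by
    rw [hHg, fromEdgeSet_adj]
    exact ⟨by simp [Sym2.eq_swap], hab.symm⟩
  have hnotmem : s(b, a) ∉ p'.edges := by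
    rw [hp', SimpleGraph.Walk.edges_transfer]
    intro hmem
    have := (p : G'.Walk a b).edges_subset_edgeSet hmem
    rw [hG', edgeSet_fromEdgeSet] at this
    rw [Sym2.eq_swap] at this
    exact hne (by exact_mod_cast this.1)
  exact hacyc b (SimpleGraph.Walk.cons hadj p')
    (SimpleGraph.Path.cons_isCycle ⟨p', hpath'⟩ hadj hnotmem)

open SimpleGraph in
lemma acyclic_kappa (G : SimpleGraph V) (A : Finset (Sym2 V)) :
    A ⊆ G.edgeFinset →
    (∀ (v : V) (w : (fromEdgeSet (↑A : Set (Sym2 V))).Walk v v), ¬ w.IsCycle) →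
    Nat.card (fromEdgeSet (↑A : Set (Sym2 V))).ConnectedComponent + A.card
      = Fintype.card V := by
  induction A using Finset.induction_on with
  | empty =>
    intro _ _
    rw [Finset.coe_empty, fromEdgeSet_empty, Finset.card_empty, add_zero]
    exact card_cc_bot
  | @insert e s hes ih =>
    intro hsub hacyc
    induction e using Sym2.ind with
    | _ a b =>
    have hmem : s(a,b) ∈ G.edgeSet := by
      rw [← SimpleGraph.mem_edgeFinset]
      exact hsub (Finset.mem_insert_self _ _)
    have hab : a ≠ b := (G.mem_edgeSet.mp hmem).ne
    have hsub' : s ⊆ G.edgeFinset := fun f hf => hsub (Finset.mem_insert_of_mem hf)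
    have hacyc' := acyclic_anti (Finset.subset_insert s(a,b) s) hacyc
    have hnr := not_reach_of_acyclic hab hes hacyc
    have hins := kappa_insert_eq hab hnr
    have := ih hsub' hacyc'
    rw [Finset.card_insert_of_notMem hes]
    omega

open SimpleGraph in
lemma circuit_subset {G : SimpleGraph V} {C : Finset (Sym2 V)} (h : IsCircuit G C) :
    C ⊆ G.edgeFinset := by
  obtain ⟨v, w, _, rfl⟩ := h
  intro f hf
  rw [SimpleGraph.mem_edgeFinset]
  exact w.edges_subset_edgeSet (List.mem_toFinset.mp hf)

open SimpleGraph in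
lemma bcf_acyclic {G : SimpleGraph V} {ord : Sym2 V → ℕ} {A : Finset (Sym2 V)}
    (hA : A ⊆ G.edgeFinset) (hbcf : ∀ B, IsBrokenCircuit G ord B → ¬ B ⊆ A) :
    ∀ (v : V) (w : (fromEdgeSet (↑A : Set (Sym2 V))).Walk v v), ¬ w.IsCycle := by
  intro v w hc
  have hq : ∀ f ∈ w.edges, f ∈ G.edgeSet := by
    intro f hf
    have := w.edges_subset_edgeSet hf
    rw [edgeSet_fromEdgeSet] at this
    rw [← SimpleGraph.mem_edgeFinset]
    exact hA (by exact_mod_cast this.1)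
  set w' : G.Walk v v := w.transfer G hq with hw'
  have hc' : w'.IsCycle := hc.transfer hq
  have hedges : w'.edges = w.edges := SimpleGraph.Walk.edges_transfer _ hq
  set C : Finset (Sym2 V) := w'.edges.toFinset with hC
  have hCA : C ⊆ A := by
    intro f hf
    rw [hC, List.mem_toFinset, hedges] at hf
    have := w.edges_subset_edgeSet hf
    rw [edgeSet_fromEdgeSet] at this
    exact_mod_cast this.1
  have hCne : C.Nonempty := by
    have h3 := hc'.three_le_length
    rw [hC]
    rcases List.eq_nil_or_concat w'.edges with hnil | _
    · rw [← SimpleGraph.Walk.length_edges, hnil] at h3; simp at h3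
    · obtain ⟨f, hf⟩ := List.exists_mem_of_ne_nil w'.edges (by
        intro h; rw [← SimpleGraph.Walk.length_edges, h] at h3; simp at h3)
      exact ⟨f, List.mem_toFinset.mpr hf⟩
  obtain ⟨e, heC, hmax⟩ := Finset.exists_max_image C ord hCne
  exact hbcf (C.erase e) ⟨C, ⟨v, w', hc', rfl⟩, e, heC, hmax, rfl⟩
    ((Finset.erase_subset _ _).trans hCA)

/-- `e` is the top edge of some broken circuit contained in `A`. -/
def TopIn (G : SimpleGraph V) (ord : Sym2 V → ℕ) (A : Finset (Sym2 V)) (e : Sym2 V) : Prop :=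
  ∃ C, IsCircuit G C ∧ e ∈ C ∧ (∀ f ∈ C, ord f ≤ ord e) ∧ C.erase e ⊆ A

noncomputable def topSet (G : SimpleGraph V) (ord : Sym2 V → ℕ) (A : Finset (Sym2 V)) :
    Finset (Sym2 V) :=
  G.edgeFinset.filter (TopIn G ord A)

lemma topSet_nonempty {G : SimpleGraph V} {ord : Sym2 V → ℕ} {A : Finset (Sym2 V)}
    (hA : A ⊆ G.edgeFinset) (h : ¬ IsBCF G ord A) : (topSet G ord A).Nonempty := by
  rw [IsBCF, not_and] at h
  push_neg at h
  obtain ⟨B, hB, hBA⟩ := h hA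
  obtain ⟨C, hC, e, heC, hmax, rfl⟩ := hB
  exact ⟨e, Finset.mem_filter.mpr ⟨circuit_subset hC heC, C, hC, heC, hmax, hBA⟩⟩

lemma not_bcf_of_topSet {G : SimpleGraph V} {ord : Sym2 V → ℕ} {A : Finset (Sym2 V)}
    {e : Sym2 V} (he : e ∈ topSet G ord A) : ¬ IsBCF G ord A := by
  obtain ⟨_, C, hC, heC, hmax, hsub⟩ := Finset.mem_filter.mp he
  intro hbcf
  exact hbcf.2 (C.erase e) ⟨C, hC, e, heC, hmax, rfl⟩ hsub

noncomputable def minTop (G : SimpleGraph V) (ord : Sym2 V → ℕ) (A : Finset (Sym2 V))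
    (h : (topSet G ord A).Nonempty) : Sym2 V :=
  (Finset.exists_min_image (topSet G ord A) ord h).choose

lemma minTop_mem {G : SimpleGraph V} {ord : Sym2 V → ℕ} {A : Finset (Sym2 V)}
    (h : (topSet G ord A).Nonempty) : minTop G ord A h ∈ topSet G ord A :=
  (Finset.exists_min_image (topSet G ord A) ord h).choose_spec.1

lemma minTop_min {G : SimpleGraph V} {ord : Sym2 V → ℕ} {A : Finset (Sym2 V)}
    (h : (topSet G ord A).Nonempty) :
    ∀ f ∈ topSet G ord A, ord (minTop G ord A h) ≤ ord f :=
  (Finset.exists_min_image (topSet G ord A) ord h).choose_spec.2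

/-- The toggle map for the sign-reversing involution. -/
noncomputable def flipA (G : SimpleGraph V) (ord : Sym2 V → ℕ) (A : Finset (Sym2 V)) :
    Finset (Sym2 V) :=
  if h : (topSet G ord A).Nonempty then
    if minTop G ord A h ∈ A then A.erase (minTop G ord A h) else insert (minTop G ord A h) A
  else A

lemma topSet_flip {G : SimpleGraph V} {ord : Sym2 V → ℕ} {A : Finset (Sym2 V)}
    (h : (topSet G ord A).Nonempty) :
    minTop G ord A h ∈ topSet G ord (flipA G ord A) ∧
      ∀ f ∈ topSet G ord (flipA G ord A), ord (minTop G ord A h) ≤ ord f := by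
  set e := minTop G ord A h with he
  have hmem := minTop_mem h
  obtain ⟨heE, C, hC, heC, hmax, hsub⟩ := Finset.mem_filter.mp hmem
  have herase : A.erase e ⊆ flipA G ord A := by
    rw [flipA, dif_pos h, ← he]
    by_cases hcase : e ∈ A
    · rw [if_pos hcase]
    · rw [if_neg hcase]
      exact (Finset.erase_subset _ _).trans (Finset.subset_insert _ _)
  have hflipsub : ∀ f ∈ flipA G ord A, f ≠ e → f ∈ A := by
    intro f hf hne
    rw [flipA, dif_pos h, ← he] at hf
    by_cases hcase : e ∈ A
    · rw [if_pos hcase] at hf; exact Finset.mem_of_mem_erase hf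
    · rw [if_neg hcase] at hf
      rcases Finset.mem_insert.mp hf with hh | hh
      · exact absurd hh hne
      · exact hh
  constructor
  · refine Finset.mem_filter.mpr ⟨heE, C, hC, heC, hmax, ?_⟩
    refine fun f hf => herase ?_
    exact Finset.mem_erase.mpr ⟨(Finset.mem_erase.mp hf).1,
      hsub hf⟩
  · intro f hf
    obtain ⟨hfE, C', hC', hfC', hmax', hsub'⟩ := Finset.mem_filter.mp hf
    by_cases hcase : C'.erase f ⊆ A
    · exact minTop_min h f (Finset.mem_filter.mpr ⟨hfE, C', hC', hfC', hmax', hcase⟩)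
    · rw [Finset.not_subset] at hcase
      obtain ⟨g, hgC', hgA⟩ := hcase
      have : g = e := by
        by_contra hne
        exact hgA (hflipsub g (hsub' hgC') hne)
      subst this
      exact hmax' e (Finset.mem_of_mem_erase hgC')

lemma minTop_unique {G : SimpleGraph V} {ord : Sym2 V → ℕ} (hord : Set.InjOn ord G.edgeSet)
    {A : Finset (Sym2 V)} {e₁ e₂ : Sym2 V} (h₁ : e₁ ∈ topSet G ord A) (h₂ : e₂ ∈ topSet G ord A)
    (hm₁ : ∀ f ∈ topSet G ord A, ord e₁ ≤ ord f) (hm₂ : ∀ f ∈ topSet G ord A, ord e₂ ≤ ord f) :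
    e₁ = e₂ := by
  have he₁ : e₁ ∈ G.edgeSet := SimpleGraph.mem_edgeFinset.mp (Finset.mem_filter.mp h₁).1
  have he₂ : e₂ ∈ G.edgeSet := SimpleGraph.mem_edgeFinset.mp (Finset.mem_filter.mp h₂).1
  exact hord he₁ he₂ (le_antisymm (hm₁ e₂ h₂) (hm₂ e₁ h₁))

lemma flipA_flipA {G : SimpleGraph V} {ord : Sym2 V → ℕ} (hord : Set.InjOn ord G.edgeSet)
    {A : Finset (Sym2 V)} (h : (topSet G ord A).Nonempty) :
    flipA G ord (flipA G ord A) = A := by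
  set e := minTop G ord A h with he
  obtain ⟨hmem', hmin'⟩ := topSet_flip h
  set B := flipA G ord A with hB
  have h' : (topSet G ord B).Nonempty := ⟨e, hmem'⟩
  have heq : minTop G ord B h' = e :=
    minTop_unique hord (minTop_mem h') hmem' (minTop_min h') hmin'
  rw [flipA, dif_pos h', heq]
  by_cases hcase : e ∈ A
  · have hBval : B = A.erase e := by rw [hB, flipA, dif_pos h, ← he, if_pos hcase]
    rw [hBval, if_neg (Finset.notMem_erase e A), Finset.insert_erase hcase]
  · have hBval : B = insert e A := by rw [hB, flipA, dif_pos h, ← he, if_neg hcase]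
    rw [hBval, if_pos (Finset.mem_insert_self e A), Finset.erase_insert hcase]

lemma flip_card_ne {G : SimpleGraph V} {ord : Sym2 V → ℕ} {A : Finset (Sym2 V)}
    (h : (topSet G ord A).Nonempty) : (flipA G ord A).card ≠ A.card := by
  set e := minTop G ord A h with he
  rw [flipA, dif_pos h, ← he]
  by_cases hcase : e ∈ A
  · rw [if_pos hcase, Finset.card_erase_of_mem hcase]
    have : 1 ≤ A.card := Finset.card_pos.mpr ⟨e, hcase⟩
    omega
  · rw [if_neg hcase, Finset.card_insert_of_notMem hcase]
    omega

lemma flip_sign {G : SimpleGraph V} {ord : Sym2 V → ℕ} {A : Finset (Sym2 V)}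
    (h : (topSet G ord A).Nonempty) :
    ((-1 : ℝ)) ^ (flipA G ord A).card = -(-1 : ℝ) ^ A.card := by
  set e := minTop G ord A h with he
  rw [flipA, dif_pos h, ← he]
  by_cases hcase : e ∈ A
  · rw [if_pos hcase, ← Finset.card_erase_add_one hcase, pow_succ]
    ring
  · rw [if_neg hcase, Finset.card_insert_of_notMem hcase, pow_succ]
    ring

open SimpleGraph in
lemma kappa_toggle {A : Finset (Sym2 V)} {a b : V}
    (hr : (fromEdgeSet (↑(A.erase s(a,b)) : Set (Sym2 V))).Reachable a b) :
    Nat.card (fromEdgeSet (↑(insert s(a,b) A) : Set (Sym2 V))).ConnectedComponent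
      = Nat.card (fromEdgeSet (↑(A.erase s(a,b)) : Set (Sym2 V))).ConnectedComponent := by
  apply ncard_cc_eq
  intro u v
  constructor
  · intro huv
    refine reach_of_adj_reach ?_ huv
    intro u' v' hadj
    rw [fromEdgeSet_adj] at hadj
    obtain ⟨hmem, hne⟩ := hadj
    by_cases heq : s(u', v') = s(a, b)
    · rcases Sym2.eq_iff.mp heq with ⟨rfl, rfl⟩ | ⟨rfl, rfl⟩
      · exact hr
      · exact hr.symm
    · have : s(u', v') ∈ A := by
        rcases Finset.mem_insert.mp (by exact_mod_cast hmem) with hh | hh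
        · exact absurd hh heq
        · exact hh
      exact Adj.reachable ((fromEdgeSet_adj _).mpr
        ⟨by exact_mod_cast Finset.mem_erase.mpr ⟨heq, this⟩, hne⟩)
  · intro huv
    refine huv.mono (fromEdgeSet_mono ?_)
    intro f hf
    simp only [Finset.coe_erase, Set.mem_diff] at hf
    exact_mod_cast Finset.mem_insert_of_mem (by exact_mod_cast hf.1)

open SimpleGraph in
lemma kappa_flip {G : SimpleGraph V} {ord : Sym2 V → ℕ} {A : Finset (Sym2 V)}
    (h : (topSet G ord A).Nonempty) :
    Nat.card (fromEdgeSet (↑(flipA G ord A) : Set (Sym2 V))).ConnectedComponent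
      = Nat.card (fromEdgeSet (↑A : Set (Sym2 V))).ConnectedComponent := by
  set e := minTop G ord A h with he
  obtain ⟨heE, C, hC, heC, hmax, hsub⟩ := Finset.mem_filter.mp (minTop_mem h)
  obtain ⟨a, b, hab⟩ : ∃ a b, e = s(a, b) := Sym2.ind (fun a b => ⟨a, b, rfl⟩) e
  obtain ⟨v, w, hcyc, hCval⟩ := hC
  have hmemw : s(a, b) ∈ w.edges := by
    rw [← hab]
    exact List.mem_toFinset.mp (hCval ▸ heC)
  have hr0 := cycle_erase_reachable hcyc hmemw
  have hr : (fromEdgeSet (↑(A.erase s(a,b)) : Set (Sym2 V))).Reachable a b := by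
    refine hr0.mono (fromEdgeSet_mono ?_)
    intro f hf
    simp only [Finset.coe_erase, Set.mem_diff, Set.mem_singleton_iff] at hf ⊢
    refine ⟨?_, hf.2⟩
    have : f ∈ C.erase e := by
      rw [hCval, hab]
      exact Finset.mem_erase.mpr ⟨hf.2, by exact_mod_cast hf.1⟩
    exact_mod_cast hsub this
  rw [flipA, dif_pos h, ← he]
  by_cases hcase : e ∈ A
  · rw [if_pos hcase, hab]
    have hkey := kappa_toggle (A := A.erase s(a,b)) (a := a) (b := b)
      (by rwa [Finset.erase_idem])
    rw [Finset.erase_idem, Finset.insert_erase (hab ▸ hcase)] at hkey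
    exact hkey.symm
  · rw [if_neg hcase, hab]
    have hkey := kappa_toggle (A := A) (a := a) (b := b) hr
    rwa [Finset.erase_eq_of_notMem (hab ▸ hcase)] at hkey

open SimpleGraph in
lemma flip_subset {G : SimpleGraph V} {ord : Sym2 V → ℕ} {A : Finset (Sym2 V)}
    (hA : A ⊆ G.edgeFinset) (h : (topSet G ord A).Nonempty) :
    flipA G ord A ⊆ G.edgeFinset := by
  have heE : minTop G ord A h ∈ G.edgeFinset := (Finset.mem_filter.mp (minTop_mem h)).1
  rw [flipA, dif_pos h]
  by_cases hcase : minTop G ord A h ∈ A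
  · rw [if_pos hcase]
    exact (Finset.erase_subset _ _).trans hA
  · rw [if_neg hcase]
    exact Finset.insert_subset heE hA

open SimpleGraph in
lemma bcf_kappa {G : SimpleGraph V} {ord : Sym2 V → ℕ} {F : Finset (Sym2 V)}
    (hbcf : IsBCF G ord F) :
    Nat.card (fromEdgeSet (↑F : Set (Sym2 V))).ConnectedComponent + F.card
      = Fintype.card V :=
  acyclic_kappa G F hbcf.1 (bcf_acyclic hbcf.1 hbcf.2)

lemma term_eq (x : ℝ) (k κ n : ℕ) (h : κ + k = n) (h0 : κ = 0 → k = 0) :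
    (-1 : ℝ) ^ k * x ^ κ = x ^ n * (-1 / x) ^ k := by
  by_cases hx : x = 0
  · subst hx
    by_cases hκ : κ = 0
    · have hk := h0 hκ
      subst hk; rw [hκ] at h; simp at h; subst h; rw [hκ]; norm_num
    · have hn : n ≠ 0 := by omega
      rw [zero_pow hκ, zero_pow hn, mul_zero, zero_mul]
  · have hxk : x ^ k ≠ 0 := pow_ne_zero _ hx
    have : x ^ n = x ^ κ * x ^ k := by rw [← pow_add, h]
    rw [div_pow, this]
    field_simp

/-- Whitney's theorem: `χ_G(x) = x^n F_G(-1/x)` for an `n`-vertex graph with a fixed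
linear ordering of its edges. -/
theorem whitney (G : SimpleGraph V) (ord : Sym2 V → ℕ)
    (hord : Set.InjOn ord G.edgeSet) (x : ℝ) :
    chromaticPoly G x = x ^ Fintype.card V * bcfSum G ord (-1 / x) := by
  classical
  rw [chromaticPoly, bcfSum]
  rw [← Finset.sum_filter_add_sum_filter_not G.edgeFinset.powerset (IsBCF G ord)]
  have hzero : ∑ A ∈ G.edgeFinset.powerset.filter (fun A => ¬ IsBCF G ord A),
      (-1 : ℝ) ^ A.card *
        x ^ Nat.card (SimpleGraph.fromEdgeSet (↑A : Set (Sym2 V))).ConnectedComponent = 0 := by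
    apply Finset.sum_involution (g := fun A _ => flipA G ord A)
    · -- sum of pairs is zero
      intro A hA
      rw [Finset.mem_filter, Finset.mem_powerset] at hA
      have h : (topSet G ord A).Nonempty := topSet_nonempty hA.1 hA.2
      rw [kappa_flip h, flip_sign h]
      ring
    · -- g a ≠ a
      intro A hA _
      rw [Finset.mem_filter, Finset.mem_powerset] at hA
      have h : (topSet G ord A).Nonempty := topSet_nonempty hA.1 hA.2
      intro heq
      exact flip_card_ne h (by rw [heq])
    · -- g a ∈ s
      intro A hA
      rw [Finset.mem_filter, Finset.mem_powerset] at hA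
      have h : (topSet G ord A).Nonempty := topSet_nonempty hA.1 hA.2
      rw [Finset.mem_filter, Finset.mem_powerset]
      exact ⟨flip_subset hA.1 h, not_bcf_of_topSet (topSet_flip h).1⟩
    · -- involution
      intro A hA
      rw [Finset.mem_filter, Finset.mem_powerset] at hA
      have h : (topSet G ord A).Nonempty := topSet_nonempty hA.1 hA.2
      exact flipA_flipA hord h
  rw [hzero, add_zero, Finset.mul_sum]
  refine Finset.sum_congr rfl ?_
  intro F hF
  rw [Finset.mem_filter] at hF
  have hbcf : IsBCF G ord F := hF.2
  have hk := bcf_kappa hbcf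
  refine term_eq x F.card _ (Fintype.card V) hk ?_
  intro hκ
  rcases isEmpty_or_nonempty V with hV | hV
  · have : Fintype.card V = 0 := Fintype.card_eq_zero
    omega
  · have hne : Nonempty
        (SimpleGraph.fromEdgeSet (↑F : Set (Sym2 V))).ConnectedComponent :=
      ⟨(SimpleGraph.fromEdgeSet (↑F : Set (Sym2 V))).connectedComponentMk
        (Classical.arbitrary V)⟩
    have : 0 < Nat.card
        (SimpleGraph.fromEdgeSet (↑F : Set (Sym2 V))).ConnectedComponent :=
      Nat.card_pos
    omega
end

section
/- Let G = (V,E) be a finite simple graph of maximum degree at most Δ ≥ 1 and let v ∈ V. For any real α ≥ 1, the rooted tree generating function satisfies T_{G,v}(ln α/(αΔ)) ≤ α. -/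
open Finset

attribute [local instance] Classical.propDecidable

variable {V : Type} [Fintype V] [DecidableEq V]

/-- Vertex support of an edge set: the non-isolated vertices. -/
def edgeSupp (F : Finset (Sym2 V)) : Finset V :=
  Finset.univ.filter fun v => ∃ e ∈ F, v ∈ e

/-- `F` is (the edge set of) a subtree of `G`: a connected acyclic edge subset. -/
def IsSubtree (G : SimpleGraph V) (F : Finset (Sym2 V)) : Prop :=
  F ⊆ G.edgeFinset ∧ (SimpleGraph.fromEdgeSet (↑F : Set (Sym2 V))).IsAcyclic ∧
    ∀ a ∈ edgeSupp F, ∀ b ∈ edgeSupp F,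
      (SimpleGraph.fromEdgeSet (↑F : Set (Sym2 V))).Reachable a b

/-- The rooted tree generating function `T_{G,v}(x)`: the sum of `x^{|T|}` over all
subtrees `T` of `G` whose vertex set contains `v` (the empty tree contributes `1`). -/
noncomputable def treeSum (G : SimpleGraph V) (v : V) (x : ℝ) : ℝ :=
  ∑ F ∈ G.edgeFinset.powerset.filter
      (fun F => IsSubtree G F ∧ (F ≠ ∅ → v ∈ edgeSupp F)), x ^ F.card

set_option linter.unusedSectionVars false

open SimpleGraph

noncomputable def subtreeSet (G : SimpleGraph V) (v : V) : Finset (Finset (Sym2 V)) :=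
  G.edgeFinset.powerset.filter (fun F => IsSubtree G F ∧ (F ≠ ∅ → v ∈ edgeSupp F))

lemma treeSum_eq (G : SimpleGraph V) (v : V) (x : ℝ) :
    treeSum G v x = ∑ F ∈ subtreeSet G v, x ^ F.card := rfl

lemma mem_subtreeSet {G : SimpleGraph V} {w : V} {F : Finset (Sym2 V)} :
    F ∈ subtreeSet G w ↔ F ⊆ G.edgeFinset ∧ IsSubtree G F ∧ (F ≠ ∅ → w ∈ edgeSupp F) := by
  simp [subtreeSet, Finset.mem_filter, Finset.mem_powerset, and_assoc]

lemma treeSum_nonneg (G : SimpleGraph V) (v : V) {x : ℝ} (hx : 0 ≤ x) :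
    0 ≤ treeSum G v x :=
  Finset.sum_nonneg fun _ _ => pow_nonneg hx _

lemma acyclic_anti_s1 {G H : SimpleGraph V} (hGH : G ≤ H) (hH : H.IsAcyclic) :
    G.IsAcyclic := fun _ c hc => hH (c.mapLe hGH) (hc.mapLe hGH)

lemma mem_edgeSupp {F : Finset (Sym2 V)} {w : V} :
    w ∈ edgeSupp F ↔ ∃ e ∈ F, w ∈ e := by simp [edgeSupp]

lemma reachable_of_mem_support {G : SimpleGraph V} {a b c : V} (p : G.Walk a b)
    (h : c ∈ p.support) : G.Reachable a c := ⟨p.takeUntil c h⟩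

noncomputable def sideSet (F : Finset (Sym2 V)) (e : Sym2 V) (r : V) : Finset (Sym2 V) :=
  (F.erase e).filter fun f => ∃ w ∈ f,
    (SimpleGraph.fromEdgeSet (↑(F.erase e) : Set (Sym2 V))).Reachable r w

lemma mem_sideSet {F : Finset (Sym2 V)} {e f : Sym2 V} {r : V} :
    f ∈ sideSet F e r ↔ f ∈ F.erase e ∧ ∃ w ∈ f,
      (SimpleGraph.fromEdgeSet (↑(F.erase e) : Set (Sym2 V))).Reachable r w := by
  simp [sideSet]

lemma sideSet_subset (F : Finset (Sym2 V)) (e : Sym2 V) (r : V) :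
    sideSet F e r ⊆ F.erase e := Finset.filter_subset _ _

set_option linter.unusedSectionVars false

lemma walk_edges_mem_sideSet {F : Finset (Sym2 V)} {e : Sym2 V} {r w : V}
    (p : (SimpleGraph.fromEdgeSet (↑(F.erase e) : Set (Sym2 V))).Walk r w) :
    ∀ f ∈ p.edges, f ∈ (SimpleGraph.fromEdgeSet (↑(sideSet F e r) : Set (Sym2 V))).edgeSet := by
  intro f hf
  have hf1 : f ∈ (SimpleGraph.fromEdgeSet (↑(F.erase e) : Set (Sym2 V))).edgeSet :=
    p.edges_subset_edgeSet hf
  rw [edgeSet_fromEdgeSet] at hf1 ⊢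
  refine ⟨?_, hf1.2⟩
  induction f using Sym2.ind with
  | _ a b =>
    have ha : a ∈ p.support := p.fst_mem_support_of_mem_edges hf
    have : s(a, b) ∈ sideSet F e r := by
      rw [mem_sideSet]
      exact ⟨by exact_mod_cast hf1.1, a, Sym2.mem_mk_left a b, reachable_of_mem_support p ha⟩
    exact_mod_cast this

lemma reachable_sideSet {F : Finset (Sym2 V)} {e : Sym2 V} {r w : V}
    (h : (SimpleGraph.fromEdgeSet (↑(F.erase e) : Set (Sym2 V))).Reachable r w) :
    (SimpleGraph.fromEdgeSet (↑(sideSet F e r) : Set (Sym2 V))).Reachable r w := by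
  obtain ⟨p⟩ := h
  exact ⟨p.transfer _ (walk_edges_mem_sideSet p)⟩

lemma not_reach_other {G : SimpleGraph V} {F : Finset (Sym2 V)} {v u : V}
    (hF : IsSubtree G F) (huv : v ≠ u) (he : s(v, u) ∈ F) :
    ¬ (SimpleGraph.fromEdgeSet (↑(F.erase s(v, u)) : Set (Sym2 V))).Reachable u v := by
  rintro ⟨p⟩
  set e : Sym2 V := s(v, u) with hedef
  have hle : (SimpleGraph.fromEdgeSet (↑(F.erase e) : Set (Sym2 V))).edgeSet ⊆
      (SimpleGraph.fromEdgeSet (↑F : Set (Sym2 V))).edgeSet := by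
    apply SimpleGraph.edgeSet_mono
    apply SimpleGraph.fromEdgeSet_mono
    exact_mod_cast Finset.erase_subset _ _
  have hp' : ∀ f ∈ p.edges, f ∈ (SimpleGraph.fromEdgeSet (↑F : Set (Sym2 V))).edgeSet :=
    fun f hf => hle (p.edges_subset_edgeSet hf)
  set p' := p.transfer _ hp' with hp'def
  have hadj : (SimpleGraph.fromEdgeSet (↑F : Set (Sym2 V))).Adj u v := by
    rw [SimpleGraph.fromEdgeSet_adj]
    exact ⟨by rwa [Sym2.eq_swap], huv.symm⟩
  have huniq := hF.2.1.path_unique p'.toPath (SimpleGraph.Path.singleton hadj)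
  have hmem : s(u, v) ∈ (p'.toPath : (SimpleGraph.fromEdgeSet (↑F : Set (Sym2 V))).Walk u v).edges := by
    rw [huniq]
    exact SimpleGraph.Path.mk'_mem_edges_singleton hadj
  have : s(u, v) ∈ p.edges := by
    have := SimpleGraph.Walk.edges_toPath_subset p' hmem
    rwa [SimpleGraph.Walk.edges_transfer] at this
  have : s(u, v) ∈ (SimpleGraph.fromEdgeSet (↑(F.erase e) : Set (Sym2 V))).edgeSet :=
    p.edges_subset_edgeSet this
  rw [edgeSet_fromEdgeSet] at this
  have : s(u, v) ∈ F.erase e := by exact_mod_cast this.1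
  rw [Sym2.eq_swap] at this
  exact (Finset.notMem_erase e F) this

lemma side_of_walk {F : Finset (Sym2 V)} {v u : V} {s a : V}
    (p : (SimpleGraph.fromEdgeSet (↑F : Set (Sym2 V))).Walk s a)
    (hs : (SimpleGraph.fromEdgeSet (↑(F.erase s(v, u)) : Set (Sym2 V))).Reachable u s ∨
          (SimpleGraph.fromEdgeSet (↑(F.erase s(v, u)) : Set (Sym2 V))).Reachable v s) :
    (SimpleGraph.fromEdgeSet (↑(F.erase s(v, u)) : Set (Sym2 V))).Reachable u a ∨
          (SimpleGraph.fromEdgeSet (↑(F.erase s(v, u)) : Set (Sym2 V))).Reachable v a := by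
  induction p with
  | nil => exact hs
  | @cons s b a h q ih =>
    apply ih
    rw [SimpleGraph.fromEdgeSet_adj] at h
    by_cases hcase : s(s, b) = s(v, u)
    · rw [Sym2.eq_iff] at hcase
      rcases hcase with ⟨rfl, rfl⟩ | ⟨rfl, rfl⟩
      · exact Or.inl (SimpleGraph.Reachable.refl _)
      · exact Or.inr (SimpleGraph.Reachable.refl _)
    · have hadj : (SimpleGraph.fromEdgeSet (↑(F.erase s(v, u)) : Set (Sym2 V))).Adj s b := by
        rw [SimpleGraph.fromEdgeSet_adj]
        refine ⟨?_, h.2⟩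
        exact_mod_cast Finset.mem_erase.2 ⟨hcase, by exact_mod_cast h.1⟩
      rcases hs with hr | hr
      · exact Or.inl (hr.trans hadj.reachable)
      · exact Or.inr (hr.trans hadj.reachable)

lemma erase_eq_sideSets_union {G : SimpleGraph V} {F : Finset (Sym2 V)} {v u : V}
    (hF : IsSubtree G F) (he : s(v, u) ∈ F) :
    F.erase s(v, u) = sideSet F s(v, u) u ∪ sideSet F s(v, u) v := by
  apply Finset.Subset.antisymm
  · intro f hf
    induction f using Sym2.ind with
    | _ a b =>
      have haF : a ∈ edgeSupp F := by
        rw [mem_edgeSupp]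
        exact ⟨s(a, b), Finset.mem_of_mem_erase hf, Sym2.mem_mk_left a b⟩
      have hvF : v ∈ edgeSupp F := by
        rw [mem_edgeSupp]
        exact ⟨s(v, u), he, Sym2.mem_mk_left v u⟩
      obtain ⟨p⟩ := hF.2.2 v hvF a haF
      have := side_of_walk (v := v) (u := u) p (Or.inr (SimpleGraph.Reachable.refl v))
      rcases this with hr | hr
      · exact Finset.mem_union_left _ (mem_sideSet.2 ⟨hf, a, Sym2.mem_mk_left a b, hr⟩)
      · exact Finset.mem_union_right _ (mem_sideSet.2 ⟨hf, a, Sym2.mem_mk_left a b, hr⟩)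
  · intro f hf
    rcases Finset.mem_union.1 hf with h | h
    · exact sideSet_subset _ _ _ h
    · exact sideSet_subset _ _ _ h

lemma sideSets_disjoint {G : SimpleGraph V} {F : Finset (Sym2 V)} {v u : V}
    (hF : IsSubtree G F) (huv : v ≠ u) (he : s(v, u) ∈ F) :
    Disjoint (sideSet F s(v, u) u) (sideSet F s(v, u) v) := by
  rw [Finset.disjoint_left]
  intro f hfu hfv
  obtain ⟨hf1, w, hwf, hru⟩ := mem_sideSet.1 hfu
  obtain ⟨-, w', hw'f, hrv⟩ := mem_sideSet.1 hfv
  apply not_reach_other hF huv he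
  by_cases hww' : w = w'
  · subst hww'; exact hru.trans hrv.symm
  · have hf2 : f = s(w, w') := ((Sym2.mem_and_mem_iff hww').1 ⟨hwf, hw'f⟩)
    have hadj : (SimpleGraph.fromEdgeSet (↑(F.erase s(v, u)) : Set (Sym2 V))).Adj w w' := by
      rw [SimpleGraph.fromEdgeSet_adj]
      exact ⟨by exact_mod_cast hf2 ▸ hf1, hww'⟩
    exact (hru.trans hadj.reachable).trans hrv.symm

lemma sideSet_reach_root {F : Finset (Sym2 V)} {e : Sym2 V} {r a : V}
    (ha : a ∈ edgeSupp (sideSet F e r)) :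
    (SimpleGraph.fromEdgeSet (↑(sideSet F e r) : Set (Sym2 V))).Reachable r a := by
  obtain ⟨f, hf, haf⟩ := mem_edgeSupp.1 ha
  obtain ⟨hf1, w, hwf, hrw⟩ := mem_sideSet.1 hf
  have hra : (SimpleGraph.fromEdgeSet (↑(F.erase e) : Set (Sym2 V))).Reachable r a := by
    by_cases haw : a = w
    · subst haw; exact hrw
    · have hf2 : f = s(a, w) := (Sym2.mem_and_mem_iff haw).1 ⟨haf, hwf⟩
      have hadj : (SimpleGraph.fromEdgeSet (↑(F.erase e) : Set (Sym2 V))).Adj w a := by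
        rw [SimpleGraph.fromEdgeSet_adj]
        refine ⟨?_, fun h => haw h.symm⟩
        rw [Sym2.eq_swap] at hf2
        exact_mod_cast hf2 ▸ hf1
      exact hrw.trans hadj.reachable
  exact reachable_sideSet hra

lemma sideSet_root {F : Finset (Sym2 V)} {e : Sym2 V} {r : V}
    (hne : sideSet F e r ≠ ∅) : r ∈ edgeSupp (sideSet F e r) := by
  obtain ⟨f, hf⟩ := Finset.nonempty_iff_ne_empty.2 hne
  obtain ⟨hf1, w, hwf, ⟨p⟩⟩ := mem_sideSet.1 hf
  cases p with
  | nil => exact mem_edgeSupp.2 ⟨f, hf, hwf⟩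
  | @cons _ b _ h q =>
    have hmem : s(r, b) ∈ (SimpleGraph.Walk.cons h q).edges := by
      simp [SimpleGraph.Walk.edges_cons]
    have := walk_edges_mem_sideSet (SimpleGraph.Walk.cons h q) _ hmem
    rw [edgeSet_fromEdgeSet] at this
    exact mem_edgeSupp.2 ⟨s(r, b), by exact_mod_cast this.1, Sym2.mem_mk_left r b⟩

lemma sideSet_acyclic {F : Finset (Sym2 V)} {e : Sym2 V} {r : V}
    (hacy : (SimpleGraph.fromEdgeSet (↑F : Set (Sym2 V))).IsAcyclic) :
    (SimpleGraph.fromEdgeSet (↑(sideSet F e r) : Set (Sym2 V))).IsAcyclic := by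
  apply acyclic_anti_s1 _ hacy
  apply SimpleGraph.fromEdgeSet_mono
  intro f hf
  exact_mod_cast Finset.mem_of_mem_erase (sideSet_subset F e r (by exact_mod_cast hf))

lemma sideSet_u_no_v {G : SimpleGraph V} {F : Finset (Sym2 V)} {v u : V}
    (hF : IsSubtree G F) (huv : v ≠ u) (he : s(v, u) ∈ F) :
    ∀ f ∈ sideSet F s(v, u) u, v ∉ f := by
  intro f hf hvf
  obtain ⟨hf1, w, hwf, hru⟩ := mem_sideSet.1 hf
  apply not_reach_other hF huv he
  by_cases hvw : v = w
  · subst hvw; exact hru.symm.symm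
  · have hf2 : f = s(w, v) := by
      rw [Sym2.eq_swap]; exact (Sym2.mem_and_mem_iff hvw).1 ⟨hvf, hwf⟩
    have hadj : (SimpleGraph.fromEdgeSet (↑(F.erase s(v, u)) : Set (Sym2 V))).Adj w v := by
      rw [SimpleGraph.fromEdgeSet_adj]
      exact ⟨by exact_mod_cast hf2 ▸ hf1, fun h => hvw h.symm⟩
    exact hru.trans hadj.reachable

lemma sideSet_u_mem {G : SimpleGraph V} {F : Finset (Sym2 V)} {v u : V}
    (hF : IsSubtree G F) (huv : v ≠ u) (he : s(v, u) ∈ F) :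
    sideSet F s(v, u) u ∈ subtreeSet (G.deleteEdges {f : Sym2 V | v ∈ f}) u := by
  have hsub : sideSet F s(v, u) u ⊆ (G.deleteEdges {f : Sym2 V | v ∈ f}).edgeFinset := by
    intro f hf
    rw [SimpleGraph.mem_edgeFinset, SimpleGraph.edgeSet_deleteEdges]
    constructor
    · have : f ∈ F := Finset.mem_of_mem_erase (sideSet_subset _ _ _ hf)
      exact SimpleGraph.mem_edgeFinset.1 (hF.1 this)
    · exact sideSet_u_no_v hF huv he f hf
  refine mem_subtreeSet.2 ⟨by convert hsub, ⟨by convert hsub, sideSet_acyclic hF.2.1, ?_⟩, fun h => sideSet_root h⟩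
  intro a ha b hb
  exact (sideSet_reach_root ha).symm.trans (sideSet_reach_root hb)

lemma sideSet_v_mem {G : SimpleGraph V} {F : Finset (Sym2 V)} {v u : V}
    (hF : IsSubtree G F) (huv : v ≠ u) (he : s(v, u) ∈ F) :
    sideSet F s(v, u) v ∈ subtreeSet (G.deleteEdges {s(v, u)}) v := by
  have hsub : sideSet F s(v, u) v ⊆ (G.deleteEdges {s(v, u)}).edgeFinset := by
    intro f hf
    rw [SimpleGraph.mem_edgeFinset, SimpleGraph.edgeSet_deleteEdges]
    have hf' := sideSet_subset _ _ _ hf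
    constructor
    · exact SimpleGraph.mem_edgeFinset.1 (hF.1 (Finset.mem_of_mem_erase hf'))
    · exact (Finset.mem_erase.1 hf').1
  refine mem_subtreeSet.2 ⟨by convert hsub, ⟨by convert hsub, sideSet_acyclic hF.2.1, ?_⟩, fun h => sideSet_root h⟩
  intro a ha b hb
  exact (sideSet_reach_root ha).symm.trans (sideSet_reach_root hb)

lemma card_decomp {G : SimpleGraph V} {F : Finset (Sym2 V)} {v u : V}
    (hF : IsSubtree G F) (huv : v ≠ u) (he : s(v, u) ∈ F) :
    F.card = (sideSet F s(v, u) v).card + (sideSet F s(v, u) u).card + 1 := by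
  have h1 : F.card = (F.erase s(v, u)).card + 1 :=
    (Finset.card_erase_add_one he).symm
  rw [h1, erase_eq_sideSets_union hF he,
    Finset.card_union_of_disjoint (sideSets_disjoint hF huv he)]
  ring

lemma recon {G : SimpleGraph V} {F : Finset (Sym2 V)} {v u : V}
    (hF : IsSubtree G F) (he : s(v, u) ∈ F) :
    F = insert s(v, u) (sideSet F s(v, u) u ∪ sideSet F s(v, u) v) := by
  rw [← erase_eq_sideSets_union hF he, Finset.insert_erase he]

lemma key (G : SimpleGraph V) {v u : V} (huv : G.Adj v u) {x : ℝ} (hx : 0 ≤ x) :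
    treeSum G v x ≤ treeSum (G.deleteEdges {s(v, u)}) v x *
      (1 + x * treeSum (G.deleteEdges {f : Sym2 V | v ∈ f}) u x) := by
  have hvu : v ≠ u := huv.ne
  rw [treeSum_eq,
    ← Finset.sum_filter_add_sum_filter_not (subtreeSet G v) (fun F => s(v, u) ∈ F)]
  have h0 : ∑ F ∈ (subtreeSet G v).filter (fun F => ¬ s(v, u) ∈ F), x ^ F.card ≤
      treeSum (G.deleteEdges {s(v, u)}) v x := by
    rw [treeSum_eq]
    apply Finset.sum_le_sum_of_subset_of_nonneg
    · intro F hFf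
      obtain ⟨hFm, hne⟩ := Finset.mem_filter.1 hFf
      obtain ⟨hsub, hist, hroot⟩ := mem_subtreeSet.1 hFm
      have hsub' : F ⊆ (G.deleteEdges {s(v, u)}).edgeFinset := by
        intro f hf
        rw [SimpleGraph.mem_edgeFinset, SimpleGraph.edgeSet_deleteEdges]
        refine ⟨SimpleGraph.mem_edgeFinset.1 (hsub hf), ?_⟩
        simp only [Set.mem_singleton_iff]
        rintro rfl; exact hne hf
      exact mem_subtreeSet.2 ⟨by convert hsub', ⟨by convert hsub', hist.2.1, hist.2.2⟩, hroot⟩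
    · intro F _ _; exact pow_nonneg hx _
  have h1 : ∑ F ∈ (subtreeSet G v).filter (fun F => s(v, u) ∈ F), x ^ F.card ≤
      x * (treeSum (G.deleteEdges {s(v, u)}) v x *
        treeSum (G.deleteEdges {f : Sym2 V | v ∈ f}) u x) := by
    set A := subtreeSet (G.deleteEdges {s(v, u)}) v with hA
    set B := subtreeSet (G.deleteEdges {f : Sym2 V | v ∈ f}) u with hB
    set T := (subtreeSet G v).filter (fun F => s(v, u) ∈ F) with hT
    have hmemT : ∀ F ∈ T, IsSubtree G F ∧ s(v, u) ∈ F := by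
      intro F hF
      obtain ⟨h1, h2⟩ := Finset.mem_filter.1 hF
      exact ⟨(mem_subtreeSet.1 h1).2.1, h2⟩
    set φ : Finset (Sym2 V) → Finset (Sym2 V) × Finset (Sym2 V) :=
      fun F => (sideSet F s(v, u) v, sideSet F s(v, u) u) with hφ
    have hsum : ∑ F ∈ T, x ^ F.card
        = ∑ F ∈ T, (x * (x ^ (φ F).1.card * x ^ (φ F).2.card)) := by
      apply Finset.sum_congr rfl
      intro F hF
      obtain ⟨hist, he⟩ := hmemT F hF
      rw [card_decomp hist hvu he, pow_add, pow_add, pow_one]; ring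
    have hinj : ∀ F ∈ T, ∀ F' ∈ T, φ F = φ F' → F = F' := by
      intro F hF F' hF' heq
      obtain ⟨histF, heF⟩ := hmemT F hF
      obtain ⟨histF', heF'⟩ := hmemT F' hF'
      have h1 : sideSet F s(v, u) v = sideSet F' s(v, u) v := congrArg Prod.fst heq
      have h2 : sideSet F s(v, u) u = sideSet F' s(v, u) u := congrArg Prod.snd heq
      rw [recon histF heF, recon histF' heF', h1, h2]
    have himg : T.image φ ⊆ A ×ˢ B := by
      rw [Finset.image_subset_iff]
      intro F hF
      obtain ⟨hist, he⟩ := hmemT F hF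
      exact Finset.mem_product.2 ⟨sideSet_v_mem hist hvu he, sideSet_u_mem hist hvu he⟩
    calc ∑ F ∈ T, x ^ F.card
        = ∑ p ∈ T.image φ, (x * (x ^ p.1.card * x ^ p.2.card)) := by
          rw [hsum, Finset.sum_image hinj]
      _ ≤ ∑ p ∈ A ×ˢ B, (x * (x ^ p.1.card * x ^ p.2.card)) := by
          apply Finset.sum_le_sum_of_subset_of_nonneg himg
          intro p _ _
          have := pow_nonneg hx p.1.card
          have := pow_nonneg hx p.2.card
          positivity
      _ = x * (treeSum (G.deleteEdges {s(v, u)}) v x *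
            treeSum (G.deleteEdges {f : Sym2 V | v ∈ f}) u x) := by
          rw [treeSum_eq, treeSum_eq, ← hA, ← hB, Finset.sum_mul_sum, ← Finset.mul_sum,
            Finset.sum_product]
  have hnn : 0 ≤ treeSum (G.deleteEdges {s(v, u)}) v x := treeSum_nonneg _ _ hx
  nlinarith [h0, h1]

lemma treeSum_eq_one (G : SimpleGraph V) (v : V) (h : ∀ w, ¬ G.Adj v w) (x : ℝ) :
    treeSum G v x = 1 := by
  have hset : subtreeSet G v = {∅} := by
    apply Finset.Subset.antisymm
    · intro F hF
      obtain ⟨hsub, hist, hroot⟩ := mem_subtreeSet.1 hF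
      rw [Finset.mem_singleton]
      by_contra hne
      obtain ⟨f, hfF, hvf⟩ := mem_edgeSupp.1 (hroot hne)
      have hfe : f ∈ G.edgeSet := SimpleGraph.mem_edgeFinset.1 (hsub hfF)
      induction f using Sym2.ind with
      | _ a b =>
        rw [SimpleGraph.mem_edgeSet] at hfe
        rcases Sym2.mem_iff.1 hvf with rfl | rfl
        · exact h b hfe
        · exact h a hfe.symm
    · intro F hF
      rw [Finset.mem_singleton] at hF
      subst hF
      refine mem_subtreeSet.2 ⟨Finset.empty_subset _, ⟨Finset.empty_subset _, ?_, ?_⟩,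
        fun hne => absurd rfl hne⟩
      · rw [Finset.coe_empty, SimpleGraph.fromEdgeSet_empty]
        exact SimpleGraph.isAcyclic_bot
      · intro a ha
        rw [mem_edgeSupp] at ha
        obtain ⟨f, hf, -⟩ := ha
        exact absurd hf (Finset.notMem_empty f)
  rw [treeSum_eq, hset, Finset.sum_singleton, Finset.card_empty, pow_zero]

lemma degree_mono {G H : SimpleGraph V} (h : G ≤ H) (w : V) : G.degree w ≤ H.degree w := by
  apply Finset.card_le_card
  intro a ha
  rw [SimpleGraph.mem_neighborFinset] at ha ⊢
  exact h ha

lemma aux_deg (Δ : ℕ) {x c α : ℝ} (hx : 0 ≤ x) (hc : c = 1 + x * α) (hc1 : 1 ≤ c)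
    (hcα : c ^ Δ ≤ α) :
    ∀ n (G : SimpleGraph V), G.edgeFinset.card ≤ n → (∀ w, G.degree w ≤ Δ) →
      ∀ v, treeSum G v x ≤ c ^ (G.degree v) := by
  intro n
  induction n with
  | zero =>
    intro G hcard hdeg v
    have : treeSum G v x = 1 := by
      apply treeSum_eq_one
      intro w hadj
      have : s(v, w) ∈ G.edgeFinset := SimpleGraph.mem_edgeFinset.2 hadj
      have := Finset.card_pos.2 ⟨_, this⟩
      omega
    rw [this]
    exact one_le_pow₀ hc1
  | succ n ih =>
    intro G hcard hdeg v
    by_cases hadj : ∃ u, G.Adj v u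
    · obtain ⟨u, huv⟩ := hadj
      have hein : s(v, u) ∈ G.edgeFinset := SimpleGraph.mem_edgeFinset.2 huv
      -- the two reduced graphs
      have hGe_le : G.deleteEdges {s(v, u)} ≤ G := SimpleGraph.deleteEdges_le _
      have hGv_le : G.deleteEdges {f : Sym2 V | v ∈ f} ≤ G := SimpleGraph.deleteEdges_le _
      have hcard_e : (G.deleteEdges {s(v, u)}).edgeFinset.card ≤ n := by
        have hss : (G.deleteEdges {s(v, u)}).edgeFinset ⊂ G.edgeFinset := by
          constructor
          · intro f hf
            rw [SimpleGraph.mem_edgeFinset] at hf ⊢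
            exact SimpleGraph.edgeSet_mono hGe_le hf
          · intro hsup
            have := hsup hein
            rw [SimpleGraph.mem_edgeFinset, SimpleGraph.edgeSet_deleteEdges] at this
            exact this.2 rfl
        have := Finset.card_lt_card hss
        omega
      have hcard_v : (G.deleteEdges {f : Sym2 V | v ∈ f}).edgeFinset.card ≤ n := by
        have hss : (G.deleteEdges {f : Sym2 V | v ∈ f}).edgeFinset ⊂ G.edgeFinset := by
          constructor
          · intro f hf
            rw [SimpleGraph.mem_edgeFinset] at hf ⊢
            exact SimpleGraph.edgeSet_mono hGv_le hf
          · intro hsup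
            have := hsup hein
            rw [SimpleGraph.mem_edgeFinset, SimpleGraph.edgeSet_deleteEdges] at this
            exact this.2 (Sym2.mem_mk_left v u)
        have := Finset.card_lt_card hss
        omega
      have ihe := ih (G.deleteEdges {s(v, u)}) (by convert hcard_e)
        (fun w => le_trans (degree_mono hGe_le w) (hdeg w)) v
      have ihv := ih (G.deleteEdges {f : Sym2 V | v ∈ f}) (by convert hcard_v)
        (fun w => le_trans (degree_mono hGv_le w) (hdeg w)) u
      -- degree bookkeeping
      have hdege : (G.deleteEdges {s(v, u)}).degree v + 1 ≤ G.degree v := by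
        have hsub : (G.deleteEdges {s(v, u)}).neighborFinset v ⊆
            (G.neighborFinset v).erase u := by
          intro w hw
          rw [SimpleGraph.mem_neighborFinset, SimpleGraph.deleteEdges_adj] at hw
          rw [Finset.mem_erase, SimpleGraph.mem_neighborFinset]
          refine ⟨?_, hw.1⟩
          rintro rfl
          exact hw.2 rfl
        have hcount := Finset.card_le_card hsub
        rw [Finset.card_erase_of_mem (by rw [SimpleGraph.mem_neighborFinset]; exact huv)] at hcount
        have hd1 : 1 ≤ G.degree v :=
          Finset.card_pos.2 ⟨u, by rw [SimpleGraph.mem_neighborFinset]; exact huv⟩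
        unfold SimpleGraph.degree at *
        omega
      have hB : treeSum (G.deleteEdges {f : Sym2 V | v ∈ f}) u x ≤ α := by
        refine le_trans ihv (le_trans ?_ hcα)
        exact pow_le_pow_right₀ hc1 (le_trans (degree_mono hGv_le u) (hdeg u))
      calc treeSum G v x
          ≤ treeSum (G.deleteEdges {s(v, u)}) v x *
              (1 + x * treeSum (G.deleteEdges {f : Sym2 V | v ∈ f}) u x) := key G huv hx
        _ ≤ c ^ ((G.deleteEdges {s(v, u)}).degree v) * c := by
            apply mul_le_mul (show treeSum (G.deleteEdges {s(v, u)}) v x ≤ c ^ ((G.deleteEdges {s(v, u)}).degree v) by convert ihe)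
            · rw [hc]
              have := treeSum_nonneg (G.deleteEdges {f : Sym2 V | v ∈ f}) u hx
              nlinarith
            · have := treeSum_nonneg (G.deleteEdges {f : Sym2 V | v ∈ f}) u hx
              nlinarith
            · positivity
        _ = c ^ ((G.deleteEdges {s(v, u)}).degree v + 1) := by rw [pow_succ]
        _ ≤ c ^ (G.degree v) := pow_le_pow_right₀ hc1 hdege
    · push_neg at hadj
      rw [treeSum_eq_one G v hadj x]
      exact one_le_pow₀ hc1

/-- For a graph of maximum degree at most `Δ ≥ 1` and any `α ≥ 1`,
`T_{G,v}(ln α / (α Δ)) ≤ α`. -/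
theorem treeSum_le (G : SimpleGraph V) (Δ : ℕ) (hΔ : 1 ≤ Δ)
    (hdeg : ∀ w : V, G.degree w ≤ Δ) (v : V) (α : ℝ) (hα : 1 ≤ α) :
    treeSum G v (Real.log α / (α * Δ)) ≤ α := by
  set x := Real.log α / (α * Δ) with hxdef
  have hα0 : (0:ℝ) < α := lt_of_lt_of_le one_pos hα
  have hΔ0 : (0:ℝ) < (Δ:ℝ) := by exact_mod_cast Nat.lt_of_lt_of_le Nat.zero_lt_one hΔ
  have hlog : 0 ≤ Real.log α := Real.log_nonneg hα
  have hx : 0 ≤ x := div_nonneg hlog (by positivity)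
  have hxα : x * α = Real.log α / Δ := by
    rw [hxdef]; field_simp
  set c := 1 + x * α with hc
  have hc1 : 1 ≤ c := by
    rw [hc]; nlinarith [mul_nonneg hx (le_of_lt hα0)]
  have hcα : c ^ Δ ≤ α := by
    have h1 : c ≤ Real.exp (Real.log α / Δ) := by
      rw [hc, hxα]
      linarith [Real.add_one_le_exp (Real.log α / Δ)]
    have h2 : c ^ Δ ≤ Real.exp (Real.log α / Δ) ^ Δ :=
      pow_le_pow_left₀ (by linarith) h1 Δ
    rw [← Real.exp_nat_mul] at h2
    have h3 : (Δ:ℝ) * (Real.log α / Δ) = Real.log α := by field_simp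
    rw [h3, Real.exp_log hα0] at h2
    exact h2
  calc treeSum G v x
      ≤ c ^ (G.degree v) := aux_deg Δ hx hc hc1 hcα G.edgeFinset.card G le_rfl hdeg v
    _ ≤ c ^ Δ := pow_le_pow_right₀ hc1 (hdeg v)
    _ ≤ α := hcα
end

section
/- Let G = (V,E) be a finite simple graph, u ∈ V, S ⊆ N(u), and V' = V − u. Fix an ordering of E in which all edges incident to u are largest. Let F be a broken-circuit-free forest in G[V'] each of whose non-trivial components contains exactly one vertex of S and such that every vertex of S lies in a non-trivial component of F. Then T = F ∪ {us : s ∈ S} is a tree, and T contains a broken circuit if and only if there exists s ∈ S such that the component of F containing s also contains some t ∈ N(u) with us < ut in the edge ordering. -/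
open Finset

attribute [local instance] Classical.propDecidable

variable {V : Type} [Fintype V] [DecidableEq V]

/-- The graph obtained from `G` by deleting the vertex `u` (keeping it as an
isolated vertex). -/
def delV (G : SimpleGraph V) (u : V) : SimpleGraph V where
  Adj a b := G.Adj a b ∧ a ≠ u ∧ b ≠ u
  symm := ⟨fun a b ⟨h, ha, hb⟩ => ⟨h.symm, hb, ha⟩⟩
  loopless := ⟨fun a ⟨h, _, _⟩ => G.loopless.irrefl a h⟩

set_option linter.unusedSectionVars false
set_option linter.unusedVariables false

lemma mem_edge_of_mem_support {G : SimpleGraph V} {a b v : V} (p : G.Walk a b)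
    (hv : v ∈ p.support) : v = a ∨ ∃ e ∈ p.edges, v ∈ e := by
  induction p with
  | nil => simpa using hv
  | @cons x y z h p ih =>
    rw [SimpleGraph.Walk.support_cons, List.mem_cons] at hv
    rcases hv with hv | hv
    · exact Or.inl hv
    · rcases ih hv with rfl | ⟨e, he, hve⟩
      · exact Or.inr ⟨s(x, v), by simp, by simp⟩
      · exact Or.inr ⟨e, by simp [he], hve⟩

lemma mem_support_of_edge {G : SimpleGraph V} {a b u : V} {f : Sym2 V} (p : G.Walk a b)
    (hf : f ∈ p.edges) (hu : u ∈ f) : u ∈ p.support := by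
  induction f using Sym2.ind with
  | _ x y =>
    rcases Sym2.mem_iff.mp hu with rfl | rfl
    · exact p.fst_mem_support_of_mem_edges hf
    · exact p.snd_mem_support_of_mem_edges hf

lemma cycle_decomp {G : SimpleGraph V} {u : V} (w : G.Walk u u) (hw : w.IsCycle) :
    ∃ (s t : V) (_ : G.Adj u s) (_ : G.Adj t u) (q : G.Walk s t),
      w.edges = s(u, s) :: (q.edges ++ [s(t, u)]) ∧ u ∉ q.support ∧ s ≠ t := by
  cases w with
  | nil => exact absurd hw SimpleGraph.Walk.IsCycle.not_of_nil
  | @cons _ s _ h p =>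
    cases p with
    | nil => exact absurd h (G.loopless.irrefl u)
    | @cons _ y _ h₂ p₂ =>
      obtain ⟨t, q, ht, hpe⟩ := SimpleGraph.Walk.exists_cons_eq_concat h₂ p₂
      have hedges : (SimpleGraph.Walk.cons h (SimpleGraph.Walk.cons h₂ p₂)).edges
          = s(u, s) :: (q.edges ++ [s(t, u)]) := by
        rw [SimpleGraph.Walk.edges_cons, hpe, SimpleGraph.Walk.edges_concat,
          List.concat_eq_append]
      have hsupp : (SimpleGraph.Walk.cons h (SimpleGraph.Walk.cons h₂ p₂)).support.tail
          = q.support ++ [u] := by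
        rw [SimpleGraph.Walk.support_cons, List.tail_cons, hpe,
          SimpleGraph.Walk.support_concat]
      have hnd := hw.support_nodup
      rw [hsupp] at hnd
      have hu : u ∉ q.support := by
        intro hu
        exact (List.disjoint_of_nodup_append hnd) hu (by simp)
      refine ⟨s, t, h, ht, q, hedges, hu, ?_⟩
      rintro rfl
      have hnd2 := hw.edges_nodup
      rw [hedges, List.nodup_cons] at hnd2
      exact hnd2.1 (by simp [Sym2.eq_swap])

lemma build_cycle {G : SimpleGraph V} {u s t : V} (hs : G.Adj u s) (ht : G.Adj t u)
    (q : G.Walk s t) (hq : q.IsPath) (hu : u ∉ q.support) (hst : s ≠ t) :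
    (SimpleGraph.Walk.cons hs (q.concat ht)).IsCycle := by
  rw [SimpleGraph.Walk.cons_isCycle_iff]
  constructor
  · rw [SimpleGraph.Walk.isPath_def, SimpleGraph.Walk.support_concat]
    exact List.Nodup.append hq.support_nodup (List.nodup_singleton u)
      (fun x hx hx' => by rw [List.mem_singleton] at hx'; exact hu (hx' ▸ hx))
  · rw [SimpleGraph.Walk.edges_concat, List.concat_eq_append]
    intro hmem
    rw [List.mem_append, List.mem_singleton] at hmem
    rcases hmem with hmem | hmem
    · exact hu (mem_support_of_edge q hmem (by simp))
    · rw [Sym2.eq_iff] at hmem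
      rcases hmem with ⟨rfl, _⟩ | ⟨_, rfl⟩
      · exact ht.ne rfl
      · exact hst rfl


/-- Proposition 2.4: let `u ∈ V`, `S ⊆ N(u)` and `V' = V - u`; suppose the edges
incident to `u` are largest in the edge ordering. If `F` is a BCF forest of `G[V']`
each of whose non-trivial components contains exactly one vertex of `S`, and every
vertex of `S` lies in a non-trivial component of `F`, then `T = F ∪ {us : s ∈ S}` is a
tree, and `T` contains a broken circuit iff there is `s ∈ S` whose component in `F`
contains some `t ∈ N(u)` with `us < ut`. -/
theorem bcf_tree_extension (G : SimpleGraph V) (ord : Sym2 V → ℕ)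
    (hord : Set.InjOn ord G.edgeSet) (u : V) (S : Finset V)
    (hS : ∀ s ∈ S, G.Adj u s)
    (hbig : ∀ f ∈ G.edgeSet, u ∈ f → ∀ g ∈ G.edgeSet, u ∉ g → ord g < ord f)
    (F : Finset (Sym2 V)) (hF : IsBCF (delV G u) ord F)
    (hone : ∀ a ∈ edgeSupp F, ∃! s, s ∈ S ∧
      (SimpleGraph.fromEdgeSet (↑F : Set (Sym2 V))).Reachable a s)
    (hcov : ∀ s ∈ S, s ∈ edgeSupp F) :
    IsSubtree G (F ∪ S.image fun s => s(u, s)) ∧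
      ((∃ B, IsBrokenCircuit G ord B ∧ B ⊆ F ∪ S.image fun s => s(u, s)) ↔
        ∃ s ∈ S, ∃ t, G.Adj u t ∧
          (SimpleGraph.fromEdgeSet (↑F : Set (Sym2 V))).Reachable s t ∧
          ord s(u, s) < ord s(u, t)) := by
  classical
  set T : Finset (Sym2 V) := F ∪ S.image (fun s => s(u, s)) with hTdef
  set GF := SimpleGraph.fromEdgeSet (↑F : Set (Sym2 V)) with hGFdef
  set GT := SimpleGraph.fromEdgeSet (↑T : Set (Sym2 V)) with hGTdef
  have hFdel : F ⊆ (delV G u).edgeFinset := hF.1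
  have hFu : ∀ e ∈ F, u ∉ e := by
    intro e he
    have hmem : e ∈ (delV G u).edgeSet := SimpleGraph.mem_edgeFinset.mp (hFdel he)
    induction e using Sym2.ind with
    | _ a b =>
      rw [SimpleGraph.mem_edgeSet] at hmem
      obtain ⟨_, ha, hb⟩ : G.Adj a b ∧ a ≠ u ∧ b ≠ u := hmem
      intro hu
      rcases Sym2.mem_iff.mp hu with rfl | rfl
      · exact ha rfl
      · exact hb rfl
  have hFG : ∀ e ∈ F, e ∈ G.edgeSet := by
    intro e he
    exact SimpleGraph.edgeSet_mono (show delV G u ≤ G from fun a b h => (h : G.Adj a b ∧ a ≠ u ∧ b ≠ u).1) (SimpleGraph.mem_edgeFinset.mp (hFdel he))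
  have hTG : ∀ e ∈ T, e ∈ G.edgeSet := by
    intro e he
    rcases Finset.mem_union.mp he with h | h
    · exact hFG e h
    · obtain ⟨s', hs', rfl⟩ := Finset.mem_image.mp h
      exact (SimpleGraph.mem_edgeSet _).mpr (hS s' hs')
  have hGFle : GF ≤ GT :=
    SimpleGraph.fromEdgeSet_mono (by exact_mod_cast Finset.subset_union_left)
  have hGTleG : GT ≤ G := by
    have h1 := SimpleGraph.fromEdgeSet_mono
      (show (↑T : Set (Sym2 V)) ⊆ G.edgeSet from fun e he => hTG e (by exact_mod_cast he))
    rwa [SimpleGraph.fromEdgeSet_edgeSet] at h1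
  have hGFleG : GF ≤ G := le_trans hGFle hGTleG
  have hmemT : ∀ a : V, a ≠ u → (s(u, a) ∈ T ↔ a ∈ S) := by
    intro a ha
    constructor
    · intro h
      rcases Finset.mem_union.mp h with h | h
      · exact absurd (by simp : u ∈ s(u, a)) (hFu _ h)
      · obtain ⟨s', hs', he⟩ := Finset.mem_image.mp h
        rwa [← Sym2.congr_right.mp he]
    · intro h
      exact Finset.mem_union_right _ (Finset.mem_image.mpr ⟨a, h, rfl⟩)
  -- walks with edges in F give reachability in GF
  have hFwalk : ∀ {a b : V} (q : G.Walk a b), (∀ f ∈ q.edges, f ∈ F) → GF.Reachable a b := by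
    intro a b q hq
    refine ⟨q.transfer GF ?_⟩
    intro f hf
    rw [hGFdef, SimpleGraph.edgeSet_fromEdgeSet]
    exact ⟨by exact_mod_cast hq f hf,
      G.not_isDiag_of_mem_edgeSet (q.edges_subset_edgeSet hf)⟩
  -- edges of GT-walks avoiding u are in F
  have hTedge : ∀ f ∈ GT.edgeSet, u ∉ f → f ∈ F := by
    intro f hf hu
    rw [hGTdef, SimpleGraph.edgeSet_fromEdgeSet] at hf
    have hfT : f ∈ T := by exact_mod_cast hf.1
    rcases Finset.mem_union.mp hfT with h | h
    · exact h
    · obtain ⟨s', _, rfl⟩ := Finset.mem_image.mp h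
      exact absurd (by simp) hu
  have hreachF : ∀ {a b : V} (q : GT.Walk a b), (∀ f ∈ q.edges, u ∉ f) → GF.Reachable a b := by
    intro a b q hq
    refine ⟨q.transfer GF ?_⟩
    intro f hf
    rw [hGFdef, SimpleGraph.edgeSet_fromEdgeSet]
    refine ⟨?_, ?_⟩
    · exact_mod_cast hTedge f (q.edges_subset_edgeSet hf) (hq f hf)
    · exact GT.not_isDiag_of_mem_edgeSet (q.edges_subset_edgeSet hf)
  -- GF is acyclic
  have hGFacyclic : GF.IsAcyclic := by
    intro v w hw
    have hwF : ∀ e ∈ w.edges, e ∈ F := by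
      intro e he
      have h1 := w.edges_subset_edgeSet he
      rw [hGFdef, SimpleGraph.edgeSet_fromEdgeSet] at h1
      exact_mod_cast h1.1
    have hdel : ∀ e ∈ w.edges, e ∈ (delV G u).edgeSet := by
      intro e he
      exact SimpleGraph.mem_edgeFinset.mp (hFdel (hwF e he))
    have hCne : w.edges.toFinset.Nonempty := by
      have h3 := hw.three_le_length
      have hlen := w.length_edges
      rcases he : w.edges with _ | ⟨e, l⟩
      · rw [he] at hlen; simp at hlen; omega
      · exact ⟨e, by simp [he]⟩
    obtain ⟨e, heC, hmax⟩ := w.edges.toFinset.exists_max_image ord hCne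
    refine hF.2 (w.edges.toFinset.erase e)
      ⟨w.edges.toFinset, ⟨v, w.transfer _ hdel, hw.transfer _, by
        rw [SimpleGraph.Walk.edges_transfer]⟩, e, heC, hmax, rfl⟩ ?_
    intro x hx
    exact hwF x (List.mem_toFinset.mp (Finset.mem_of_mem_erase hx))
  -- GT-adjacency of u with S
  have hadjTu : ∀ s ∈ S, GT.Adj u s := by
    intro s hs
    rw [hGTdef, SimpleGraph.fromEdgeSet_adj]
    exact ⟨by exact_mod_cast (hmemT s (hS s hs).ne').mpr hs, (hS s hs).ne⟩
  -- acyclicity of GT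
  have hGTacyclic : GT.IsAcyclic := by
    intro v w hw
    by_cases hu : u ∈ w.support
    · obtain ⟨s, t, hs, ht, q, hedges, husup, hst⟩ := cycle_decomp (w.rotate u hu) (hw.rotate hu)
      have h1 : s(u, s) ∈ (↑T : Set (Sym2 V)) ∧ u ≠ s := (SimpleGraph.fromEdgeSet_adj _).mp hs
      have hsS : s ∈ S := (hmemT s (Ne.symm h1.2)).mp (by exact_mod_cast h1.1)
      have h2 : s(t, u) ∈ (↑T : Set (Sym2 V)) ∧ t ≠ u := (SimpleGraph.fromEdgeSet_adj _).mp ht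
      have htS : t ∈ S := by
        refine (hmemT t h2.2).mp ?_
        have h3 := h2.1
        rw [Sym2.eq_swap] at h3
        exact_mod_cast h3
      have hreach : GF.Reachable s t :=
        hreachF q (fun f hf huf => husup (mem_support_of_edge q hf huf))
      obtain ⟨x, _, huniq⟩ := hone s (hcov s hsS)
      exact hst ((huniq s ⟨hsS, SimpleGraph.Reachable.refl s⟩).trans (huniq t ⟨htS, hreach⟩).symm)
    · have hq : ∀ f ∈ w.edges, u ∉ f := fun f hf huf => hu (mem_support_of_edge w hf huf)
      have hsub : ∀ f ∈ w.edges, f ∈ GF.edgeSet := by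
        intro f hf
        rw [hGFdef, SimpleGraph.edgeSet_fromEdgeSet]
        exact ⟨by exact_mod_cast hTedge f (w.edges_subset_edgeSet hf) (hq f hf),
          GT.not_isDiag_of_mem_edgeSet (w.edges_subset_edgeSet hf)⟩
      exact hGFacyclic (w.transfer GF hsub) (hw.transfer _)
  -- connectivity to u
  have hsuppF : ∀ a ∈ edgeSupp F, GT.Reachable a u := by
    intro a ha
    obtain ⟨s', ⟨hs'S, hs'r⟩, _⟩ := hone a ha
    exact (hs'r.mono hGFle).trans (hadjTu s' hs'S).symm.reachable
  have hreachu : ∀ a ∈ edgeSupp T, GT.Reachable a u := by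
    intro a ha
    have ha' : ∃ e ∈ T, a ∈ e := by
      simpa only [edgeSupp, Finset.mem_filter, Finset.mem_univ, true_and] using ha
    obtain ⟨e, he, hae⟩ := ha'
    rcases Finset.mem_union.mp he with h | h
    · refine hsuppF a ?_
      simp only [edgeSupp, Finset.mem_filter, Finset.mem_univ, true_and]
      exact ⟨e, h, hae⟩
    · obtain ⟨s', hs', rfl⟩ := Finset.mem_image.mp h
      rcases Sym2.mem_iff.mp hae with h | h
      · rw [h]
      · rw [h]; exact (hadjTu s' hs').symm.reachable
  refine ⟨⟨fun e he => SimpleGraph.mem_edgeFinset.mpr (hTG e he), hGTacyclic,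
    fun a ha b hb => (hreachu a ha).trans (hreachu b hb).symm⟩, ?_, ?_⟩
  · -- forward direction
    rintro ⟨B, ⟨C, ⟨v, w, hw, rfl⟩, e, heC, hmax, rfl⟩, hBT⟩
    by_cases hu : u ∈ w.support
    · obtain ⟨s, t, hs, ht, q, hedges, husup, hst⟩ := cycle_decomp (w.rotate u hu) (hw.rotate hu)
      have hCeq : w.edges.toFinset = insert s(u, s) (insert s(t, u) q.edges.toFinset) := by
        rw [← List.toFinset_eq_of_perm _ _ (w.rotate_edges u hu).perm, hedges]
        ext f; simp
      have hqF : ∀ f ∈ q.edges, u ∉ f := fun f hf huf => husup (mem_support_of_edge q hf huf)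
      have hue : u ∈ e := by
        by_contra hue
        have hsC : s(u, s) ∈ w.edges.toFinset := by rw [hCeq]; simp
        have h1 := hmax s(u, s) hsC
        have heG : e ∈ G.edgeSet := w.edges_subset_edgeSet (List.mem_toFinset.mp heC)
        have h2 := hbig s(u, s) ((SimpleGraph.mem_edgeSet _).mpr hs) (by simp) e heG hue
        omega
      have heor : e = s(u, s) ∨ e = s(t, u) := by
        have heC' : e ∈ insert s(u, s) (insert s(t, u) q.edges.toFinset) := hCeq ▸ heC
        rcases Finset.mem_insert.mp heC' with h | h
        · exact Or.inl h
        rcases Finset.mem_insert.mp h with h | h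
        · exact Or.inr h
        · exact absurd hue (hqF e (List.mem_toFinset.mp h))
      have hqe : ∀ f ∈ q.edges, f ∈ F := by
        intro f hf
        have hfB : f ∈ w.edges.toFinset.erase e :=
          Finset.mem_erase.mpr ⟨fun h => (hqF f hf) (h ▸ hue), by rw [hCeq]; simp [hf]⟩
        rcases Finset.mem_union.mp (hBT hfB) with h | h
        · exact h
        · obtain ⟨s', _, heq⟩ := Finset.mem_image.mp h
          exact absurd (by rw [← heq]; simp) (hqF f hf)
      have hreach : GF.Reachable s t := hFwalk q hqe
      have hqG : G.Walk s t := q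
      rcases heor with rfl | rfl
      · -- e = s(u,s) is maximal; witness (t, s)
        have htS : t ∈ S := by
          have htB : s(t, u) ∈ w.edges.toFinset.erase s(u, s) := by
            refine Finset.mem_erase.mpr ⟨fun heq => ?_, by rw [hCeq]; simp⟩
            rcases Sym2.eq_iff.mp heq with h | h
            · exact ht.ne h.1
            · exact hst h.1.symm
          have h1 : s(u, t) ∈ T := by rw [Sym2.eq_swap]; exact hBT htB
          exact (hmemT t ht.ne).mp h1
        refine ⟨t, htS, s, hs, hreach.symm, ?_⟩
        have hle : ord s(u, t) ≤ ord s(u, s) := by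
          rw [Sym2.eq_swap (a := u) (b := t)]
          exact hmax s(t, u) (by rw [hCeq]; simp)
        refine lt_of_le_of_ne hle (fun h => ?_)
        have := hord ((SimpleGraph.mem_edgeSet _).mpr (ht.symm)) ((SimpleGraph.mem_edgeSet _).mpr hs) h
        exact hst (Sym2.congr_right.mp this).symm
      · -- e = s(t,u) is maximal; witness (s, t)
        have hsS : s ∈ S := by
          have hsB : s(u, s) ∈ w.edges.toFinset.erase s(t, u) := by
            refine Finset.mem_erase.mpr ⟨fun heq => ?_, by rw [hCeq]; simp⟩
            rcases Sym2.eq_iff.mp heq with h | h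
            · exact ht.ne h.1.symm
            · exact hst h.2
          exact (hmemT s hs.ne').mp (hBT hsB)
        refine ⟨s, hsS, t, ht.symm, hreach, ?_⟩
        have hle : ord s(u, s) ≤ ord s(u, t) := by
          rw [Sym2.eq_swap (a := u) (b := t)]
          exact hmax s(u, s) (by rw [hCeq]; simp)
        refine lt_of_le_of_ne hle (fun h => ?_)
        have := hord ((SimpleGraph.mem_edgeSet _).mpr hs) ((SimpleGraph.mem_edgeSet _).mpr ht.symm) h
        exact hst (Sym2.congr_right.mp this)
    · exfalso
      have hq : ∀ f ∈ w.edges, u ∉ f := fun f hf huf => hu (mem_support_of_edge w hf huf)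
      have hdel : ∀ f ∈ w.edges, f ∈ (delV G u).edgeSet := by
        intro f hf
        have hfG := w.edges_subset_edgeSet hf
        have hfu := hq f hf
        induction f using Sym2.ind with
        | _ x y =>
          rw [SimpleGraph.mem_edgeSet] at hfG ⊢
          exact (⟨hfG, fun h => hfu (by simp [h]), fun h => hfu (by simp [h])⟩ : G.Adj x y ∧ x ≠ u ∧ y ≠ u)
      refine hF.2 (w.edges.toFinset.erase e)
        ⟨w.edges.toFinset, ⟨v, w.transfer _ hdel, hw.transfer _, by
          rw [SimpleGraph.Walk.edges_transfer]⟩, e, heC, hmax, rfl⟩ ?_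
      intro x hx
      have hxC := List.mem_toFinset.mp (Finset.mem_of_mem_erase hx)
      rcases Finset.mem_union.mp (hBT hx) with h | h
      · exact h
      · obtain ⟨s', _, rfl⟩ := Finset.mem_image.mp h
        exact absurd (by simp) (hq _ hxC)
  · -- backward direction
    rintro ⟨s, hsS, t, hut, hreach, hlt⟩
    have hst : s ≠ t := by rintro rfl; exact lt_irrefl _ hlt
    obtain ⟨p⟩ := hreach
    have hq0path : (p.toPath : GF.Walk s t).IsPath := p.toPath.2
    have hq0F : ∀ f ∈ (p.toPath : GF.Walk s t).edges, f ∈ F := by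
      intro f hf
      have h1 := (p.toPath : GF.Walk s t).edges_subset_edgeSet hf
      rw [hGFdef, SimpleGraph.edgeSet_fromEdgeSet] at h1
      exact_mod_cast h1.1
    have hsubG : ∀ f ∈ (p.toPath : GF.Walk s t).edges, f ∈ G.edgeSet :=
      fun f hf => hFG f (hq0F f hf)
    set q : G.Walk s t := (p.toPath : GF.Walk s t).transfer G hsubG with hqdef
    have hqedges : q.edges = (p.toPath : GF.Walk s t).edges :=
      SimpleGraph.Walk.edges_transfer _ _
    have hqF : ∀ f ∈ q.edges, f ∈ F := by rw [hqedges]; exact hq0F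
    have hqpath : q.IsPath := by
      rw [SimpleGraph.Walk.isPath_def, hqdef, SimpleGraph.Walk.support_transfer]
      exact hq0path.support_nodup
    have husup : u ∉ q.support := by
      intro hu
      rcases mem_edge_of_mem_support q hu with h | ⟨f, hf, huf⟩
      · exact (hS s hsS).ne h
      · exact hFu f (hqF f hf) huf
    have hcyc := build_cycle (hS s hsS) hut.symm q hqpath husup hst
    set w := SimpleGraph.Walk.cons (hS s hsS) (q.concat hut.symm) with hwdef
    have hwedges : w.edges = s(u, s) :: (q.edges ++ [s(t, u)]) := by
      rw [hwdef, SimpleGraph.Walk.edges_cons, SimpleGraph.Walk.edges_concat,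
        List.concat_eq_append]
    have hCeq : w.edges.toFinset = insert s(u, s) (insert s(t, u) q.edges.toFinset) := by
      rw [hwedges]; ext f; simp
    have htu : s(t, u) = s(u, t) := Sym2.eq_swap
    refine ⟨w.edges.toFinset.erase s(t, u), ⟨w.edges.toFinset, ⟨u, w, hcyc, rfl⟩,
      s(t, u), by rw [hCeq]; simp, ?_, rfl⟩, ?_⟩
    · intro f hf
      rw [hCeq] at hf
      rcases Finset.mem_insert.mp hf with rfl | hf
      · rw [htu]; exact hlt.le
      rcases Finset.mem_insert.mp hf with rfl | hf
      · exact le_refl _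
      · refine (hbig s(t, u) ((SimpleGraph.mem_edgeSet _).mpr hut.symm) (by simp) f
          (q.edges_subset_edgeSet (List.mem_toFinset.mp hf))
          (hFu f (hqF f (List.mem_toFinset.mp hf)))).le
    · intro x hx
      obtain ⟨hne, hxC⟩ := Finset.mem_erase.mp hx
      rw [hCeq] at hxC
      rcases Finset.mem_insert.mp hxC with rfl | hxC
      · exact Finset.mem_union_right _ (Finset.mem_image.mpr ⟨s, hsS, rfl⟩)
      rcases Finset.mem_insert.mp hxC with rfl | hxC
      · exact absurd rfl hne
      · exact Finset.mem_union_left _ (hqF x (List.mem_toFinset.mp hxC))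
end
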